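/- The kernel of the ℚ-algebra homomorphism ℚ[x,y,z,t] → ℚ[a,b,c] sending x ↦ ac², y ↦ b²(a+c), z ↦ ab(a+c), t ↦ bc(a+c) is the principal ideal generated by the irreducible polynomial xy(z+t) − zt²; i.e., the implicit equation of the closure of the image of the rational map ℙ² ⇢ ℙ³ given by (ac² : b²(a+c) : ab(a+c) : bc(a+c)) is H = xy(z+t) − zt². -/

import Mathlib

open MvPolynomial

set_option maxHeartbeats 1000000
set_option synthInstance.maxHeartbeats 1000000

-- variables of `ℚ[x,y,z,t]`
local notation "x" => (MvPolynomial.X 0 : MvPolynomial (Fin 4) ℚ)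
local notation "y" => (MvPolynomial.X 1 : MvPolynomial (Fin 4) ℚ)
local notation "z" => (MvPolynomial.X 2 : MvPolynomial (Fin 4) ℚ)
local notation "t" => (MvPolynomial.X 3 : MvPolynomial (Fin 4) ℚ)

-- variables of `ℚ[a,b,c]`
local notation "a" => (MvPolynomial.X 0 : MvPolynomial (Fin 3) ℚ)
local notation "b" => (MvPolynomial.X 1 : MvPolynomial (Fin 3) ℚ)
local notation "c" => (MvPolynomial.X 2 : MvPolynomial (Fin 3) ℚ)

/-! ### Auxiliary: pseudo-division by a linear polynomial -/

theorem ImplAux.pseudo_div {S : Type*} [CommRing S] (α β : S) (P : Polynomial S) :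
    ∃ (n : ℕ) (Q : Polynomial S) (r : S),
      Polynomial.C α ^ n * P = Q * (Polynomial.C α * Polynomial.X - Polynomial.C β) +
        Polynomial.C r := by
  have mono : ∀ (k : ℕ) (s : S), ∃ (n : ℕ) (Q : Polynomial S) (r : S),
      Polynomial.C α ^ n * (Polynomial.C s * Polynomial.X ^ k) =
        Q * (Polynomial.C α * Polynomial.X - Polynomial.C β) + Polynomial.C r := by
    intro k
    induction k with
    | zero => exact fun s => ⟨0, 0, s, by simp⟩
    | succ k ih =>
      intro s
      obtain ⟨n, Q, r, hQ⟩ := ih (s * β)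
      refine ⟨n + 1, Polynomial.C α ^ n * Polynomial.C s * Polynomial.X ^ k + Q, r, ?_⟩
      rw [map_mul] at hQ
      linear_combination (exp := 1) hQ
  induction P using Polynomial.induction_on' with
  | monomial k s =>
    obtain ⟨n, Q, r, h⟩ := mono k s
    exact ⟨n, Q, r, by rwa [Polynomial.C_mul_X_pow_eq_monomial] at h⟩
  | add P1 P2 h1 h2 =>
    obtain ⟨n1, Q1, r1, e1⟩ := h1
    obtain ⟨n2, Q2, r2, e2⟩ := h2
    refine ⟨n1 + n2, Polynomial.C α ^ n2 * Q1 + Polynomial.C α ^ n1 * Q2,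
      α ^ n2 * r1 + α ^ n1 * r2, ?_⟩
    rw [map_add, map_mul, map_mul, map_pow, map_pow]
    linear_combination (exp := 1) Polynomial.C α ^ n2 * e1 + Polynomial.C α ^ n1 * e2

/-! ### Auxiliary: injectivity of the coefficient map -/

noncomputable def ImplAux.L : (Fin 3 →₀ ℕ) →+ (Fin 3 →₀ ℕ) where
  toFun v := Finsupp.equivFunOnFinite.symm ![v 1, 2*v 0 + v 1 + v 2, v 0 + v 1 + 2*v 2]
  map_zero' := by ext j; fin_cases j <;> simp
  map_add' u v := by
    ext j; fin_cases j <;>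
      simp [Finsupp.coe_equivFunOnFinite_symm] <;> ring

theorem ImplAux.L_apply (v : Fin 3 →₀ ℕ) (j : Fin 3) :
    ImplAux.L v j = ![v 1, 2*v 0 + v 1 + v 2, v 0 + v 1 + 2*v 2] j := by
  simp [ImplAux.L, Finsupp.coe_equivFunOnFinite_symm]

theorem ImplAux.L_inj : Function.Injective ImplAux.L := by
  intro u v h
  have h0 := Finsupp.ext_iff.1 h 0
  have h1 := Finsupp.ext_iff.1 h 1
  have h2 := Finsupp.ext_iff.1 h 2
  simp only [ImplAux.L_apply] at h0 h1 h2
  simp at h0 h1 h2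
  ext j; fin_cases j <;> simp <;> omega

noncomputable def ImplAux.M : MvPolynomial (Fin 3) ℚ →ₐ[ℚ] MvPolynomial (Fin 3) ℚ :=
  AddMonoidAlgebra.mapDomainAlgHom ℚ ℚ ImplAux.L

theorem ImplAux.M_inj : Function.Injective ImplAux.M :=
  AddMonoidAlgebra.mapDomain_injective ImplAux.L_inj

theorem ImplAux.M_X (i : Fin 3) :
    ImplAux.M (X i) = monomial (ImplAux.L (Finsupp.single i 1)) 1 := by
  show AddMonoidAlgebra.mapDomain ImplAux.L (X i) = _
  rw [X, ← single_eq_monomial, AddMonoidAlgebra.mapDomain_single, single_eq_monomial]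

theorem ImplAux.M_X0 : ImplAux.M (X 0) = b ^ 2 * c := by
  rw [ImplAux.M_X]
  have : ImplAux.L (Finsupp.single 0 1) = Finsupp.single 1 2 + Finsupp.single 2 1 := by
    ext j; fin_cases j <;> simp [ImplAux.L, Finsupp.coe_equivFunOnFinite_symm]
  rw [this]
  simp [X_pow_eq_monomial, X, monomial_mul, monomial_pow, Finsupp.smul_single]

theorem ImplAux.M_X1 : ImplAux.M (X 1) = a * b * c := by
  rw [ImplAux.M_X]
  have : ImplAux.L (Finsupp.single 1 1)
      = Finsupp.single 0 1 + Finsupp.single 1 1 + Finsupp.single 2 1 := by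
    ext j; fin_cases j <;> simp [ImplAux.L, Finsupp.coe_equivFunOnFinite_symm]
  rw [this]
  simp [X_pow_eq_monomial, X, monomial_mul, monomial_pow, Finsupp.smul_single]

theorem ImplAux.M_X2 : ImplAux.M (X 2) = b * c ^ 2 := by
  rw [ImplAux.M_X]
  have : ImplAux.L (Finsupp.single 2 1) = Finsupp.single 1 1 + Finsupp.single 2 2 := by
    ext j; fin_cases j <;> simp [ImplAux.L, Finsupp.coe_equivFunOnFinite_symm]
  rw [this]
  simp [X_pow_eq_monomial, X, monomial_mul, monomial_pow, Finsupp.smul_single]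

noncomputable def ImplAux.gmap : MvPolynomial (Fin 3) ℚ →ₐ[ℚ] MvPolynomial (Fin 3) ℚ :=
  aeval ![b ^ 2 * (a + c), a * b * (a + c), b * c * (a + c)]

noncomputable def ImplAux.fmap : MvPolynomial (Fin 3) ℚ →ₐ[ℚ] MvPolynomial (Fin 3) ℚ :=
  aeval ![a, b, c - a]

noncomputable def ImplAux.fmap' : MvPolynomial (Fin 3) ℚ →ₐ[ℚ] MvPolynomial (Fin 3) ℚ :=
  aeval ![a, b, c + a]

noncomputable def ImplAux.smap : MvPolynomial (Fin 3) ℚ →ₐ[ℚ] MvPolynomial (Fin 3) ℚ :=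
  aeval ![a, b, c - b]

noncomputable def ImplAux.smap' : MvPolynomial (Fin 3) ℚ →ₐ[ℚ] MvPolynomial (Fin 3) ℚ :=
  aeval ![a, b, c + b]

theorem ImplAux.fmap_inj : Function.Injective ImplAux.fmap := by
  have h : ImplAux.fmap'.comp ImplAux.fmap = AlgHom.id ℚ _ := by
    apply MvPolynomial.algHom_ext
    intro i; fin_cases i <;> simp [ImplAux.fmap, ImplAux.fmap']
  intro p q hpq
  have := congrArg ImplAux.fmap' hpq
  rwa [← AlgHom.comp_apply, ← AlgHom.comp_apply, h, AlgHom.id_apply, AlgHom.id_apply] at this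

theorem ImplAux.smap_inj : Function.Injective ImplAux.smap := by
  have h : ImplAux.smap'.comp ImplAux.smap = AlgHom.id ℚ _ := by
    apply MvPolynomial.algHom_ext
    intro i; fin_cases i <;> simp [ImplAux.smap, ImplAux.smap']
  intro p q hpq
  have := congrArg ImplAux.smap' hpq
  rwa [← AlgHom.comp_apply, ← AlgHom.comp_apply, h, AlgHom.id_apply, AlgHom.id_apply] at this

theorem ImplAux.key_comp : ImplAux.fmap.comp ImplAux.gmap = ImplAux.M.comp ImplAux.smap := by
  apply MvPolynomial.algHom_ext
  intro i; fin_cases i <;>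
    simp [ImplAux.fmap, ImplAux.gmap, ImplAux.smap, ImplAux.M_X0, ImplAux.M_X1,
      ImplAux.M_X2] <;> ring

theorem ImplAux.gmap_inj : Function.Injective ImplAux.gmap := by
  have h1 : Function.Injective (ImplAux.fmap.comp ImplAux.gmap) := by
    rw [ImplAux.key_comp]
    exact fun p q hpq => ImplAux.smap_inj (ImplAux.M_inj hpq)
  exact fun p q hpq => h1 (by simp [AlgHom.comp_apply, hpq])

/-! ### Auxiliary: primes in `ℚ[a,b,c]` -/

theorem ImplAux.prime_X0 : Prime (X 0 : MvPolynomial (Fin 3) ℚ) := by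
  rw [← MulEquiv.prime_iff (finSuccEquiv ℚ 2).toRingEquiv.toMulEquiv]
  have : (finSuccEquiv ℚ 2) (X 0) = Polynomial.X := finSuccEquiv_X_zero
  rw [show ((finSuccEquiv ℚ 2).toRingEquiv.toMulEquiv (X 0) :
      Polynomial (MvPolynomial (Fin 2) ℚ)) = Polynomial.X from this]
  exact Polynomial.prime_X

noncomputable def ImplAux.tmap : MvPolynomial (Fin 3) ℚ ≃ₐ[ℚ] MvPolynomial (Fin 3) ℚ :=
  AlgEquiv.ofAlgHom
    (aeval ![X 1 + X 2, X 0, X 2])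
    (aeval ![X 1, X 0 - X 2, X 2])
    (by apply MvPolynomial.algHom_ext; intro i; fin_cases i <;> simp)
    (by apply MvPolynomial.algHom_ext; intro i; fin_cases i <;> simp)

theorem ImplAux.prime_X1_add_X2 : Prime (X 1 + X 2 : MvPolynomial (Fin 3) ℚ) := by
  have := (MulEquiv.prime_iff ImplAux.tmap.toRingEquiv.toMulEquiv
    (p := (X 0 : MvPolynomial (Fin 3) ℚ))).mpr ImplAux.prime_X0
  have e : (ImplAux.tmap.toRingEquiv.toMulEquiv (X 0) : MvPolynomial (Fin 3) ℚ)
      = X 1 + X 2 := by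
    show ImplAux.tmap (X 0) = _
    simp [ImplAux.tmap, AlgEquiv.ofAlgHom]
  rwa [e] at this

theorem ImplAux.not_dvd_X0 : ¬ (X 0 : MvPolynomial (Fin 3) ℚ) ∣ X 1 * X 2 ^ 2 := by
  rintro ⟨q, hq⟩
  have := congrArg (aeval (![0, X 1, X 2] : Fin 3 → MvPolynomial (Fin 3) ℚ)) hq
  simp at this

theorem ImplAux.not_dvd_X1_add_X2 :
    ¬ (X 1 + X 2 : MvPolynomial (Fin 3) ℚ) ∣ X 1 * X 2 ^ 2 := by
  rintro ⟨q, hq⟩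
  have := congrArg (aeval (![X 0, -X 2, X 2] : Fin 3 → MvPolynomial (Fin 3) ℚ)) hq
  simp at this

theorem ImplAux.e_X1 : (finSuccEquiv ℚ 3) (X 1) = Polynomial.C (X 0) := by
  rw [show (1 : Fin 4) = Fin.succ 0 from rfl]; exact finSuccEquiv_X_succ
theorem ImplAux.e_X2 : (finSuccEquiv ℚ 3) (X 2) = Polynomial.C (X 1) := by
  rw [show (2 : Fin 4) = Fin.succ 1 from rfl]; exact finSuccEquiv_X_succ
theorem ImplAux.e_X3 : (finSuccEquiv ℚ 3) (X 3) = Polynomial.C (X 2) := by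
  rw [show (3 : Fin 4) = Fin.succ 2 from rfl]; exact finSuccEquiv_X_succ

theorem ImplAux.main_dvd (p : MvPolynomial (Fin 4) ℚ)
    (hp : (MvPolynomial.aeval
        (![a * c ^ 2, b ^ 2 * (a + c), a * b * (a + c), b * c * (a + c)]) :
        MvPolynomial (Fin 4) ℚ →ₐ[ℚ] MvPolynomial (Fin 3) ℚ) p = 0) :
    (x * y * (z + t) - z * t ^ 2) ∣ p := by
  set φ := (MvPolynomial.aeval
      (![a * c ^ 2, b ^ 2 * (a + c), a * b * (a + c), b * c * (a + c)]) :
      MvPolynomial (Fin 4) ℚ →ₐ[ℚ] MvPolynomial (Fin 3) ℚ) with hφ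
  set e := finSuccEquiv ℚ 3 with he
  set α := (X 0 * (X 1 + X 2) : MvPolynomial (Fin 3) ℚ) with hα
  set β := (X 1 * X 2 ^ 2 : MvPolynomial (Fin 3) ℚ) with hβ
  set h := (Polynomial.C α * Polynomial.X - Polynomial.C β :
      Polynomial (MvPolynomial (Fin 3) ℚ)) with hh
  have hH : e (x * y * (z + t) - z * t ^ 2) = h := by
    rw [hh, hα, hβ]
    simp [he, ImplAux.e_X1, ImplAux.e_X2, ImplAux.e_X3, finSuccEquiv_X_zero]
    ring
  set ψ := φ.comp (e.symm : Polynomial (MvPolynomial (Fin 3) ℚ) ≃ₐ[ℚ]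
      MvPolynomial (Fin 4) ℚ).toAlgHom with hψ
  have hψC : ∀ r : MvPolynomial (Fin 3) ℚ, ψ (Polynomial.C r) = ImplAux.gmap r := by
    have hcomp : ψ.comp (IsScalarTower.toAlgHom ℚ (MvPolynomial (Fin 3) ℚ)
        (Polynomial (MvPolynomial (Fin 3) ℚ))) = ImplAux.gmap := by
      apply MvPolynomial.algHom_ext
      intro i
      have hCi : (IsScalarTower.toAlgHom ℚ (MvPolynomial (Fin 3) ℚ)
          (Polynomial (MvPolynomial (Fin 3) ℚ))) (X i) = Polynomial.C (X i) := rfl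
      rw [AlgHom.comp_apply, hCi]
      fin_cases i
      · have : e.symm (Polynomial.C (X 0)) = X 1 := by
          rw [← ImplAux.e_X1, AlgEquiv.symm_apply_apply]
        simp [hψ, this, hφ, ImplAux.gmap]
      · have : e.symm (Polynomial.C (X 1)) = X 2 := by
          rw [← ImplAux.e_X2, AlgEquiv.symm_apply_apply]
        simp [hψ, this, hφ, ImplAux.gmap]
      · have : e.symm (Polynomial.C (X 2)) = X 3 := by
          rw [← ImplAux.e_X3, AlgEquiv.symm_apply_apply]
        simp [hψ, this, hφ, ImplAux.gmap]
    intro r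
    rw [← hcomp]
    rfl
  have hψX : ψ Polynomial.X = a * c ^ 2 := by
    have : e.symm Polynomial.X = X 0 := by
      rw [← finSuccEquiv_X_zero (R := ℚ) (n := 3), AlgEquiv.symm_apply_apply]
    simp [hψ, this, hφ]
  have hψh : ψ h = 0 := by
    rw [hh, map_sub, map_mul, hψX, hψC, hψC, hα, hβ]
    simp [ImplAux.gmap]
    ring
  have hψP : ψ (e p) = 0 := by
    rw [hψ, AlgHom.comp_apply]
    show φ (e.symm (e p)) = 0
    rw [AlgEquiv.symm_apply_apply]
    exact hp
  clear_value α β h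
  obtain ⟨n, Q, r, hQ⟩ := ImplAux.pseudo_div α β (e p)
  rw [← hh] at hQ
  have h1 := congrArg ψ hQ
  rw [map_mul, map_pow, hψP, mul_zero, map_add, map_mul, hψh, mul_zero, zero_add,
    hψC] at h1
  have hr0 : r = 0 := ImplAux.gmap_inj (by rw [map_zero]; exact h1.symm)
  rw [hr0, map_zero, add_zero] at hQ
  have hCα : Polynomial.C α = Polynomial.C (X 0 : MvPolynomial (Fin 3) ℚ) *
      Polynomial.C (X 1 + X 2 : MvPolynomial (Fin 3) ℚ) := by rw [hα, map_mul]
  rw [hCα, mul_pow] at hQ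
  have hdvd : h ∣ (Polynomial.C (X 0 : MvPolynomial (Fin 3) ℚ)) ^ n *
      (Polynomial.C (X 1 + X 2 : MvPolynomial (Fin 3) ℚ)) ^ n * e p :=
    ⟨Q, hQ.trans (mul_comm Q h)⟩
  have hC0 : ¬ Polynomial.C (X 0 : MvPolynomial (Fin 3) ℚ) ∣ h := by
    rw [Polynomial.C_dvd_iff_dvd_coeff]
    push_neg
    refine ⟨0, ?_⟩
    have hc : h.coeff 0 = -β := by rw [hh]; simp
    rw [hc, dvd_neg, hβ]
    exact ImplAux.not_dvd_X0
  have hC12 : ¬ Polynomial.C (X 1 + X 2 : MvPolynomial (Fin 3) ℚ) ∣ h := by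
    rw [Polynomial.C_dvd_iff_dvd_coeff]
    push_neg
    refine ⟨0, ?_⟩
    have hc : h.coeff 0 = -β := by rw [hh]; simp
    rw [hc, dvd_neg, hβ]
    exact ImplAux.not_dvd_X1_add_X2
  have hrel : IsRelPrime h ((Polynomial.C (X 0 : MvPolynomial (Fin 3) ℚ)) ^ n *
      (Polynomial.C (X 1 + X 2 : MvPolynomial (Fin 3) ℚ)) ^ n) := by
    have p0 : Prime (Polynomial.C (X 0 : MvPolynomial (Fin 3) ℚ)) :=
      Polynomial.prime_C_iff.mpr ImplAux.prime_X0
    have p12 : Prime (Polynomial.C (X 1 + X 2 : MvPolynomial (Fin 3) ℚ)) :=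
      Polynomial.prime_C_iff.mpr ImplAux.prime_X1_add_X2
    exact ((p0.irreducible.isRelPrime_iff_not_dvd.mpr hC0).symm.pow_right).mul_right
      ((p12.irreducible.isRelPrime_iff_not_dvd.mpr hC12).symm.pow_right)
  have hfin : h ∣ e p := hrel.dvd_of_dvd_mul_left hdvd
  obtain ⟨u, hu⟩ := hfin
  refine ⟨e.symm u, ?_⟩
  have hfin2 := congrArg e.symm hu
  rw [AlgEquiv.symm_apply_apply, map_mul, ← hH, AlgEquiv.symm_apply_apply] at hfin2
  exact hfin2

theorem ImplAux.aeval_H_zero :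
    (MvPolynomial.aeval
        (![a * c ^ 2, b ^ 2 * (a + c), a * b * (a + c), b * c * (a + c)]) :
        MvPolynomial (Fin 4) ℚ →ₐ[ℚ] MvPolynomial (Fin 3) ℚ)
      (x * y * (z + t) - z * t ^ 2) = 0 := by
  simp only [map_sub, map_mul, map_add, map_pow, aeval_X, Matrix.cons_val_zero,
    Matrix.cons_val_one, Matrix.head_cons, Matrix.cons_val_two, Matrix.tail_cons,
    Matrix.cons_val_three, Matrix.cons_val_fin_one]
  ring

theorem ImplAux.H_ne_zero : (x * y * (z + t) - z * t ^ 2) ≠ 0 := by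
  intro h0
  have := congrArg (eval (![1, 1, 1, 0] : Fin 4 → ℚ)) h0
  have e2 : (![1, 1, 1, 0] : Fin 4 → ℚ) 2 = 1 := rfl
  have e3 : (![1, 1, 1, 0] : Fin 4 → ℚ) 3 = 0 := rfl
  norm_num [e2, e3] at this

/-- The kernel of `ℚ[x,y,z,t] → ℚ[a,b,c]`, `x ↦ ac²`, `y ↦ b²(a+c)`, `z ↦ ab(a+c)`,
`t ↦ bc(a+c)`, is the principal ideal generated by the irreducible polynomial
`xy(z+t) - zt²`: the implicit equation of the image of the rational map `ℙ² ⇢ ℙ³` given by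
`(ac² : b²(a+c) : ab(a+c) : bc(a+c))` is `H = xy(z+t) - zt²`. -/
theorem implicit_equation_of_example :
    RingHom.ker (MvPolynomial.aeval
        (![a * c ^ 2, b ^ 2 * (a + c), a * b * (a + c), b * c * (a + c)]) :
        MvPolynomial (Fin 4) ℚ →ₐ[ℚ] MvPolynomial (Fin 3) ℚ) =
      Ideal.span {x * y * (z + t) - z * t ^ 2} ∧
    Irreducible (x * y * (z + t) - z * t ^ 2) := by
  have hker : RingHom.ker (MvPolynomial.aeval
        (![a * c ^ 2, b ^ 2 * (a + c), a * b * (a + c), b * c * (a + c)]) :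
        MvPolynomial (Fin 4) ℚ →ₐ[ℚ] MvPolynomial (Fin 3) ℚ) =
      Ideal.span {x * y * (z + t) - z * t ^ 2} := by
    apply le_antisymm
    · intro p hp
      rw [RingHom.mem_ker] at hp
      exact Ideal.mem_span_singleton.2 (ImplAux.main_dvd p hp)
    · rw [Ideal.span_le]
      intro q hq
      rw [Set.mem_singleton_iff] at hq
      subst hq
      rw [SetLike.mem_coe, RingHom.mem_ker]
      exact ImplAux.aeval_H_zero
  refine ⟨hker, ?_⟩
  have hprime : (Ideal.span ({x * y * (z + t) - z * t ^ 2} :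
      Set (MvPolynomial (Fin 4) ℚ))).IsPrime := hker ▸ RingHom.ker_isPrime _
  exact ((Ideal.span_singleton_prime ImplAux.H_ne_zero).mp hprime).irreducible
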